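/- Let w₁ᵉ, ..., wₙᵉ be real-valued functions of ε on an interval (0, β) such that each limit Mᵢ = lim_{ε→0⁺} wᵢᵉ exists and is finite. Suppose the maximum 𝔐 = max(M₁, ..., Mₙ) is attained at a unique index i₀. Then for any nonzero real constants γ₁, ..., γₙ with γ_{i₀} > 0, the limit as ε → 0⁺ of ε·ln(∑ᵢ γᵢ e^(wᵢᵉ/ε)) equals 𝔐. -/

import Mathlib

open Filter Real Finset

theorem stmt_2 (n : ℕ) (w : Fin (n + 1) → ℝ → ℝ) (M : Fin (n + 1) → ℝ)
    (hM : ∀ i, Tendsto (w i) (nhdsWithin 0 (Set.Ioi 0)) (nhds (M i)))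
    (i₀ : Fin (n + 1)) (hmax : ∀ i, i ≠ i₀ → M i < M i₀)
    (γ : Fin (n + 1) → ℝ) (hγ : ∀ i, γ i ≠ 0) (hγ₀ : 0 < γ i₀) :
    ∃ β' > (0 : ℝ),
      (∀ ε ∈ Set.Ioo (0 : ℝ) β', 0 < ∑ i, γ i * Real.exp (w i ε / ε)) ∧
      Tendsto (fun ε : ℝ => ε * Real.log (∑ i, γ i * Real.exp (w i ε / ε)))
        (nhdsWithin 0 (Set.Ioi 0)) (nhds (M i₀)) := by
  set l := nhdsWithin (0:ℝ) (Set.Ioi 0) with hl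
  set R : ℝ → ℝ := fun ε => ∑ i ∈ univ.erase i₀, (γ i / γ i₀) * Real.exp ((w i ε - w i₀ ε) / ε)
    with hRdef
  -- R tends to 0
  have hR : Tendsto R l (nhds 0) := by
    have h : Tendsto R l (nhds (∑ i ∈ univ.erase i₀, (0:ℝ))) := by
      apply tendsto_finset_sum
      intro i hi
      have hi' : i ≠ i₀ := (Finset.mem_erase.mp hi).1
      have h1 : Tendsto (fun ε => w i ε - w i₀ ε) l (nhds (M i - M i₀)) := (hM i).sub (hM i₀)
      have h2 : Tendsto (fun ε : ℝ => ε⁻¹) l atTop := tendsto_inv_nhdsGT_zero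
      have h3 : Tendsto (fun ε => (w i ε - w i₀ ε) * ε⁻¹) l atBot :=
        h1.neg_mul_atTop (by linarith [hmax i hi']) h2
      have h4 : Tendsto (fun ε => Real.exp ((w i ε - w i₀ ε) / ε)) l (nhds 0) := by
        rw [Real.tendsto_exp_comp_nhds_zero]
        simpa [div_eq_mul_inv] using h3
      have := h4.const_mul (γ i / γ i₀)
      simpa using this
    simpa using h
  -- key algebraic identity
  have key : ∀ ε : ℝ, 0 < ε →
      ∑ i, γ i * Real.exp (w i ε / ε) = γ i₀ * Real.exp (w i₀ ε / ε) * (1 + R ε) := by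
    intro ε hε
    have hε' : ε ≠ 0 := ne_of_gt hε
    rw [← Finset.add_sum_erase _ _ (Finset.mem_univ i₀), mul_add, mul_one, Finset.mul_sum]
    congr 1
    apply Finset.sum_congr rfl
    intro i hi
    have hexp : Real.exp ((w i ε - w i₀ ε) / ε)
        = Real.exp (w i ε / ε) / Real.exp (w i₀ ε / ε) := by
      rw [← Real.exp_sub, sub_div]
    rw [hexp]
    field_simp
  -- eventually |R| < 1/2 and ε > 0
  have h1 : ∀ᶠ ε in l, |R ε| < 1/2 := by
    have := Metric.tendsto_nhds.mp hR (1/2) (by norm_num)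
    simpa [Real.dist_eq] using this
  have h2 : ∀ᶠ ε in l, (0:ℝ) < ε := by
    filter_upwards [self_mem_nhdsWithin] with ε hε
    exact hε
  have hmem : {ε : ℝ | |R ε| < 1/2 ∧ 0 < ε} ∈ l := (h1.and h2)
  obtain ⟨β', hβ', hsub⟩ := mem_nhdsGT_iff_exists_Ioo_subset.mp hmem
  have hβ'0 : (0:ℝ) < β' := hβ'
  -- positivity
  have hpos : ∀ ε : ℝ, |R ε| < 1/2 → 0 < ε → 0 < ∑ i, γ i * Real.exp (w i ε / ε) := by
    intro ε habs hε
    rw [key ε hε]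
    have h1R : (0:ℝ) < 1 + R ε := by
      have := abs_lt.mp habs
      linarith [this.1]
    positivity
  refine ⟨β', hβ'0, ?_, ?_⟩
  · intro ε hε
    obtain ⟨habs, hεpos⟩ := hsub hε
    exact hpos ε habs hεpos
  · -- tendsto
    have hε0 : Tendsto (fun ε : ℝ => ε) l (nhds 0) := by
      have : l ≤ nhds (0:ℝ) := nhdsWithin_le_nhds
      exact this
    have t1 : Tendsto (fun ε : ℝ => ε * Real.log (γ i₀)) l (nhds 0) := by
      simpa using hε0.mul_const (Real.log (γ i₀))
    have t2 : Tendsto (fun ε => w i₀ ε) l (nhds (M i₀)) := hM i₀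
    have t3 : Tendsto (fun ε => 1 + R ε) l (nhds 1) := by
      simpa using tendsto_const_nhds.add hR
    have t4 : Tendsto (fun ε => Real.log (1 + R ε)) l (nhds 0) := by
      have := (Real.continuousAt_log one_ne_zero).tendsto.comp t3
      simpa [Function.comp_def] using this
    have t5 : Tendsto (fun ε : ℝ => ε * Real.log (1 + R ε)) l (nhds 0) := by
      simpa using hε0.mul t4
    have tg : Tendsto
        (fun ε : ℝ => ε * Real.log (γ i₀) + w i₀ ε + ε * Real.log (1 + R ε)) l
        (nhds (M i₀)) := by
      have := (t1.add t2).add t5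
      simpa using this
    apply tg.congr'
    filter_upwards [hmem] with ε hε
    obtain ⟨habs, hεpos⟩ := hε
    have hε' : ε ≠ 0 := ne_of_gt hεpos
    have h1R : (0:ℝ) < 1 + R ε := by
      have := abs_lt.mp habs
      linarith [this.1]
    rw [key ε hεpos, Real.log_mul (by positivity) (ne_of_gt h1R),
      Real.log_mul (ne_of_gt hγ₀) (Real.exp_ne_zero _), Real.log_exp]
    field_simp
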